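/- Fix an integer n ≥ 1, a field 𝔽 and elements t, s ∈ 𝔽 with t ≠ s. Let R(t,s) be the trigonometric R-matrix and, for n×n matrices A, B over 𝔽, let C := (A⊗B)·R(t,s) − R(t,s)·(A⊗B). Then for all indices 1 ≤ p ≤ n and 1 ≤ q ≤ n, the ((p,p),(q,q)) entry of C vanishes: C_{(p,p),(q,q)} = 0. (With A = A(t) and B = A(s), this says the Sklyanin bracket {a_{pq}(t), a_{pq}(s)} of a matrix entry with itself at different spectral parameters vanishes, matching the vanishing case of the network-induced bracket for separated sources and sinks.) -/

import Mathlib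

open Matrix Kronecker

/-- The `n×n` matrix unit `E_{ij}`. -/
def matrixUnit {𝔽 : Type*} [Field 𝔽] (n : ℕ) (i j : Fin n) : Matrix (Fin n) (Fin n) 𝔽 :=
  Matrix.single i j 1

/-- The trigonometric R-matrix
`R(t,s) = ((t+s)/(s−t))·Σ_k E_{kk}⊗E_{kk}
        + (2/(s−t))·Σ_{l<m} (t·E_{lm}⊗E_{ml} + s·E_{ml}⊗E_{lm})`,
acting on the tensor square indexed by pairs `(i,j) ∈ {1,…,n}²` with the
Kronecker convention `(X⊗Y)_{(i,j),(k,l)} = X_{ik}·Y_{jl}`. -/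
def trigR {𝔽 : Type*} [Field 𝔽] (n : ℕ) (t s : 𝔽) :
    Matrix (Fin n × Fin n) (Fin n × Fin n) 𝔽 :=
  ((t + s) / (s - t)) •
      ∑ k : Fin n, (matrixUnit n k k) ⊗ₖ (matrixUnit n k k)
    + (2 / (s - t)) •
      ∑ l : Fin n, ∑ m : Fin n,
        if l < m then
          t • ((matrixUnit n l m) ⊗ₖ (matrixUnit n m l))
            + s • ((matrixUnit n m l) ⊗ₖ (matrixUnit n l m))
        else 0

/-- The entrywise Sklyanin bracket `C = (A⊗B)·R(t,s) − R(t,s)·(A⊗B)`. -/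
def sklyaninC {𝔽 : Type*} [Field 𝔽] (n : ℕ) (A B : Matrix (Fin n) (Fin n) 𝔽)
    (t s : 𝔽) : Matrix (Fin n × Fin n) (Fin n × Fin n) 𝔽 :=
  (A ⊗ₖ B) * trigR n t s - trigR n t s * (A ⊗ₖ B)


lemma offsum_zero {𝔽 : Type*} [Field 𝔽] {n : ℕ} (t s : 𝔽) (x1 x2 q : Fin n) :
    (∑ l : Fin n, ∑ m : Fin n,
        if l < m then
          t • ((matrixUnit n l m) ⊗ₖ (matrixUnit n m l))
            + s • ((matrixUnit n m l) ⊗ₖ (matrixUnit n l m))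
        else (0 : Matrix (Fin n × Fin n) (Fin n × Fin n) 𝔽)) (x1, x2) (q, q) = 0 := by
  rw [Matrix.sum_apply]
  apply Finset.sum_eq_zero
  intro l _
  rw [Matrix.sum_apply]
  apply Finset.sum_eq_zero
  intro m _
  by_cases h : l < m
  · simp only [if_pos h, Matrix.add_apply, Matrix.smul_apply, Matrix.kroneckerMap_apply,
      matrixUnit, Matrix.single, Matrix.of_apply, smul_eq_mul]
    have : l ≠ m := ne_of_lt h
    split_ifs <;> simp_all
  · simp [h]

lemma offsum_zero' {𝔽 : Type*} [Field 𝔽] {n : ℕ} (t s : 𝔽) (x1 x2 q : Fin n) :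
    (∑ l : Fin n, ∑ m : Fin n,
        if l < m then
          t • ((matrixUnit n l m) ⊗ₖ (matrixUnit n m l))
            + s • ((matrixUnit n m l) ⊗ₖ (matrixUnit n l m))
        else (0 : Matrix (Fin n × Fin n) (Fin n × Fin n) 𝔽)) (q, q) (x1, x2) = 0 := by
  rw [Matrix.sum_apply]
  apply Finset.sum_eq_zero
  intro l _
  rw [Matrix.sum_apply]
  apply Finset.sum_eq_zero
  intro m _
  by_cases h : l < m
  · simp only [if_pos h, Matrix.add_apply, Matrix.smul_apply, Matrix.kroneckerMap_apply,
      matrixUnit, Matrix.single, Matrix.of_apply, smul_eq_mul]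
    have : l ≠ m := ne_of_lt h
    split_ifs <;> simp_all
  · simp [h]

lemma diagsum {𝔽 : Type*} [Field 𝔽] {n : ℕ} (x1 x2 q1 q2 : Fin n) :
    (∑ k : Fin n, (matrixUnit n k k) ⊗ₖ (matrixUnit n k k) :
      Matrix (Fin n × Fin n) (Fin n × Fin n) 𝔽) (x1, x2) (q1, q2) =
    if x1 = q1 ∧ x1 = x2 ∧ x2 = q2 then 1 else 0 := by
  rw [Matrix.sum_apply]
  simp only [Matrix.kroneckerMap_apply, matrixUnit, Matrix.single, Matrix.of_apply]
  by_cases h : x1 = q1 ∧ x1 = x2 ∧ x2 = q2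
  · obtain ⟨h1, h2, h3⟩ := h
    subst h1; subst h3; subst h2
    simp [Finset.sum_ite_eq]
  · rw [if_neg h]
    apply Finset.sum_eq_zero
    intro k _
    split_ifs <;> first | rfl | aesop

lemma trigR_col {𝔽 : Type*} [Field 𝔽] {n : ℕ} (t s : 𝔽) (x : Fin n × Fin n) (q : Fin n) :
    trigR n t s x (q, q) = if x = (q, q) then (t + s) / (s - t) else 0 := by
  obtain ⟨x1, x2⟩ := x
  rw [trigR]
  simp only [Matrix.add_apply, Matrix.smul_apply, smul_eq_mul]
  rw [offsum_zero, diagsum]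
  simp only [mul_zero, add_zero, Prod.mk.injEq]
  split_ifs <;> first | rfl | aesop

lemma trigR_row {𝔽 : Type*} [Field 𝔽] {n : ℕ} (t s : 𝔽) (x : Fin n × Fin n) (q : Fin n) :
    trigR n t s (q, q) x = if x = (q, q) then (t + s) / (s - t) else 0 := by
  obtain ⟨x1, x2⟩ := x
  rw [trigR]
  simp only [Matrix.add_apply, Matrix.smul_apply, smul_eq_mul]
  rw [offsum_zero', diagsum]
  simp only [mul_zero, add_zero, Prod.mk.injEq]
  split_ifs <;> first | rfl | aesop

/-- Entry `((p,p),(q,q))` of the Sklyanin bracket vanishes: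
`{a_{pq}(t), a_{pq}(s)} = 0`. -/
theorem sklyanin_entry_diagonal_vanishes {n : ℕ} (hn : 1 ≤ n) {𝔽 : Type*} [Field 𝔽]
    (t s : 𝔽) (hts : t ≠ s) (A B : Matrix (Fin n) (Fin n) 𝔽)
    (p q : Fin n) :
    sklyaninC n A B t s (p, p) (q, q) = 0 := by
  simp only [sklyaninC, Matrix.sub_apply, Matrix.mul_apply]
  simp only [trigR_col, trigR_row, mul_ite, mul_zero, ite_mul, zero_mul,
    Finset.sum_ite_eq, Finset.sum_ite_eq', Finset.mem_univ, if_true]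
  ring
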